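/- A 1-uniform family of finite sets is a minimal odd-sunflower if and only if it consists of exactly two distinct singletons. A 2-uniform family of finite sets is a minimal odd-sunflower if and only if, up to an injective relabeling of the elements of its ground set, it equals {{1,2},{3,4}} or {{1,2},{1,3},{1,4}}. -/

import Mathlib

variable {α : Type*}

/-- A family of at least two nonempty finite sets is an *odd-sunflower* if every element of
the union of its members is contained in an odd number of its members. -/
def IsOddSunflower [DecidableEq α] (F : Finset (Finset α)) : Prop :=
  2 ≤ F.card ∧ (∀ S ∈ F, S.Nonempty) ∧
    ∀ x ∈ F.sup id, Odd (F.filter (fun S => x ∈ S)).card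

/-- A family is *odd-sunflower-free* if no subfamily of it (necessarily with at least two
members) is an odd-sunflower. -/
def OddSunflowerFree [DecidableEq α] (F : Finset (Finset α)) : Prop :=
  ∀ H ⊆ F, ¬ IsOddSunflower H

/-- A nonempty family of nonempty finite sets is an *even-sunflower* if every element of
the union of its members is contained in an even number of its members. -/
def IsEvenSunflower [DecidableEq α] (F : Finset (Finset α)) : Prop :=
  F.Nonempty ∧ (∀ S ∈ F, S.Nonempty) ∧
    ∀ x ∈ F.sup id, Even (F.filter (fun S => x ∈ S)).card

/-- A family is *even-sunflower-free* if no nonempty subfamily of it is an even-sunflower. -/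
def EvenSunflowerFree [DecidableEq α] (F : Finset (Finset α)) : Prop :=
  ∀ H ⊆ F, ¬ IsEvenSunflower H

/-- A family of at least three sets is a *sunflower* if every element is contained either
in all of the sets or in at most one of them. -/
def IsSunflower [DecidableEq α] (H : Finset (Finset α)) : Prop :=
  3 ≤ H.card ∧ ∀ x : α, (∀ S ∈ H, x ∈ S) ∨ (H.filter (fun S => x ∈ S)).card ≤ 1

/-- A family of sets is an *antichain* if none of its members is a proper subset of another. -/
def IsAntichainFamily (F : Finset (Finset α)) : Prop :=
  ∀ S ∈ F, ∀ T ∈ F, S ⊆ T → S = T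

/-- An odd-sunflower is *minimal* if no proper subfamily of it is an odd-sunflower. -/
def IsMinimalOddSunflower [DecidableEq α] (F : Finset (Finset α)) : Prop :=
  IsOddSunflower F ∧ ∀ H ⊂ F, ¬ IsOddSunflower H

/-- `Cfam n` is the family of all `(n-1)`-element subsets of `{1, …, n}`. -/
def Cfam (n : ℕ) : Finset (Finset ℕ) := (Finset.Icc 1 n).powersetCard (n - 1)

/-- `CfamPlus n` is `Cfam n` together with the full set `{1, …, n}`. -/
def CfamPlus (n : ℕ) : Finset (Finset ℕ) := insert (Finset.Icc 1 n) (Cfam n)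

/-- A multifamily (multiset) of at least two nonempty finite sets is an *odd-sunflower* if
every element of the union of its members has odd degree (counted with multiplicity). -/
def MultiOddSunflower [DecidableEq α] (H : Multiset (Finset α)) : Prop :=
  2 ≤ Multiset.card H ∧ (∀ S ∈ H, S.Nonempty) ∧
    ∀ x ∈ H.sup, Odd (H.countP (fun S => x ∈ S))

/-- The wreath product of two families. -/
def Wreath {β : Type*} [DecidableEq α] [DecidableEq β]
    (F : Set (Finset α)) (G : Set (Finset β)) : Set (Finset (α × β)) :=
  {S | ∃ F₀ ∈ F, ∃ g : α → Finset β, (∀ i ∈ F₀, g i ∈ G) ∧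
    S = F₀.biUnion (fun i => ({i} : Finset α) ×ˢ g i)}

/-- Odd-sunflower-freeness for set-indexed families. -/
def OddSunflowerFreeS [DecidableEq α] (F : Set (Finset α)) : Prop :=
  ∀ H : Finset (Finset α), ↑H ⊆ F → ¬ IsOddSunflower H

/-- Antichain condition for set-indexed families. -/
def IsAntichainFamilyS (F : Set (Finset α)) : Prop :=
  ∀ S ∈ F, ∀ T ∈ F, S ⊆ T → S = T

variable [DecidableEq α]

lemma pair_sup {S T : Finset α} : ({S, T} : Finset (Finset α)).sup id = S ∪ T := by
  simp [Finset.sup_insert, Finset.sup_singleton]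

lemma disjoint_pair_OS {S T : Finset α} (hS : S.Nonempty) (hT : T.Nonempty) (hne : S ≠ T)
    (hd : Disjoint S T) : IsOddSunflower ({S, T} : Finset (Finset α)) := by
  refine ⟨by rw [Finset.card_pair hne], ?_, ?_⟩
  · intro U hU; rcases Finset.mem_insert.mp hU with rfl | hU
    · exact hS
    · rw [Finset.mem_singleton.mp hU]; exact hT
  · intro x hx
    rw [pair_sup, Finset.mem_union] at hx
    rcases hx with hx | hx
    · have hxT : x ∉ T := Finset.disjoint_left.mp hd hx
      have : ({S, T} : Finset (Finset α)).filter (fun U => x ∈ U) = {S} := by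
        simp [Finset.filter_insert, Finset.filter_singleton, hx, hxT]
      rw [this, Finset.card_singleton]; exact odd_one
    · have hxS : x ∉ S := Finset.disjoint_right.mp hd hx
      have : ({S, T} : Finset (Finset α)).filter (fun U => x ∈ U) = {T} := by
        simp [Finset.filter_insert, Finset.filter_singleton, hx, hxS]
      rw [this, Finset.card_singleton]; exact odd_one

lemma common_pair_not_OS {S T : Finset α} {v : α} (hne : S ≠ T) (hvS : v ∈ S) (hvT : v ∈ T) :
    ¬ IsOddSunflower ({S, T} : Finset (Finset α)) := by
  rintro ⟨-, -, hodd⟩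
  have hv := hodd v (by rw [pair_sup]; exact Finset.mem_union_left _ hvS)
  have : ({S, T} : Finset (Finset α)).filter (fun U => v ∈ U) = {S, T} := by
    simp [Finset.filter_insert, Finset.filter_singleton, hvS, hvT]
  rw [this, Finset.card_pair hne] at hv
  simp [Nat.odd_iff] at hv

lemma eq_pair_of {S : Finset α} {v x : α} (hv : v ∈ S) (hx : x ∈ S) (hne : v ≠ x)
    (hc : S.card = 2) : S = {v, x} := by
  refine (Finset.eq_of_subset_of_card_le ?_ ?_).symm
  · intro z hz; rcases Finset.mem_insert.mp hz with rfl | hz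
    · exact hv
    · rw [Finset.mem_singleton.mp hz]; exact hx
  · rw [hc, Finset.card_pair hne]

lemma pair_struct {S : Finset α} {v : α} (hv : v ∈ S) (hc : S.card = 2) :
    ∃ a, a ≠ v ∧ S = {v, a} := by
  obtain ⟨x, y, hxy, rfl⟩ := Finset.card_eq_two.mp hc
  rcases Finset.mem_insert.mp hv with rfl | hv
  · exact ⟨y, hxy.symm, rfl⟩
  · rw [Finset.mem_singleton.mp hv]
    exact ⟨x, hxy, Finset.pair_comm x y⟩

lemma star_OS {v : α} {H : Finset (Finset α)} (h2 : 2 ≤ H.card) (hoddc : Odd H.card)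
    (hm : ∀ S ∈ H, v ∈ S ∧ S.card = 2) : IsOddSunflower H := by
  refine ⟨h2, fun S hS => Finset.card_pos.mp (by rw [(hm S hS).2]; norm_num), ?_⟩
  intro x hx
  by_cases hxv : x = v
  · subst hxv
    have : H.filter (fun S => x ∈ S) = H := Finset.filter_true_of_mem (fun S hS => (hm S hS).1)
    rw [this]; exact hoddc
  · have hle : (H.filter (fun S => x ∈ S)).card ≤ 1 := by
      rw [Finset.card_le_one]
      intro S hS T hT
      rw [Finset.mem_filter] at hS hT
      rw [eq_pair_of (hm S hS.1).1 hS.2 (Ne.symm hxv) (hm S hS.1).2,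
        eq_pair_of (hm T hT.1).1 hT.2 (Ne.symm hxv) (hm T hT.1).2]
    have hge : 1 ≤ (H.filter (fun S => x ∈ S)).card := by
      rw [Finset.mem_sup] at hx
      obtain ⟨S, hS, hxS⟩ := hx
      exact Finset.card_pos.mpr ⟨S, Finset.mem_filter.mpr ⟨hS, hxS⟩⟩
    have : (H.filter (fun S => x ∈ S)).card = 1 := le_antisymm hle hge
    rw [this]; exact odd_one

lemma injOn4 {a b c d : α} (hab : a ≠ b) (hac : a ≠ c) (had : a ≠ d) (hbc : b ≠ c)
    (hbd : b ≠ d) (hcd : c ≠ d) :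
    Set.InjOn (fun x => if x = a then 1 else if x = b then 2 else if x = c then 3 else
      if x = d then 4 else 0 : α → ℕ) ↑({a, b, c, d} : Finset α) := by
  intro x hx y hy h
  simp only [Finset.coe_insert, Set.mem_insert_iff, Finset.coe_singleton,
    Set.mem_singleton_iff] at hx hy
  rcases hx with rfl | rfl | rfl | rfl <;> rcases hy with rfl | rfl | rfl | rfl <;>
    simp_all [hab, hac, had, hbc, hbd, hcd, hab.symm, hac.symm, had.symm, hbc.symm,
      hbd.symm, hcd.symm]

/-- Classification of 1-uniform and 2-uniform minimal odd-sunflowers. -/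
theorem oneMOS_twoMOS_classification {α : Type*} [DecidableEq α] :
    (∀ F : Finset (Finset α), (∀ S ∈ F, S.card = 1) →
      (IsMinimalOddSunflower F ↔ ∃ x y : α, x ≠ y ∧ F = {{x}, {y}})) ∧
    (∀ F : Finset (Finset α), (∀ S ∈ F, S.card = 2) →
      (IsMinimalOddSunflower F ↔
        ∃ f : α → ℕ, Set.InjOn f ↑(F.sup id) ∧
          (F.image (fun S => S.image f) =
              ({{1, 2}, {3, 4}} : Finset (Finset ℕ)) ∨
           F.image (fun S => S.image f) =
              ({{1, 2}, {1, 3}, {1, 4}} : Finset (Finset ℕ))))) := by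
  constructor
  · -- Part 1: 1-uniform
    intro F h1
    constructor
    · rintro ⟨⟨hF2, hne, hodd⟩, hmin⟩
      obtain ⟨S, hS, T, hT, hST⟩ := Finset.one_lt_card.mp hF2
      obtain ⟨x, rfl⟩ := Finset.card_eq_one.mp (h1 S hS)
      obtain ⟨y, rfl⟩ := Finset.card_eq_one.mp (h1 T hT)
      have hxy : x ≠ y := fun h => hST (by rw [h])
      refine ⟨x, y, hxy, ?_⟩
      have hsub : ({{x}, {y}} : Finset (Finset α)) ⊆ F := by
        simp [Finset.insert_subset_iff, hS, hT]
      have hOS : IsOddSunflower ({{x}, {y}} : Finset (Finset α)) :=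
        disjoint_pair_OS (Finset.singleton_nonempty x) (Finset.singleton_nonempty y) hST
          (by simp [hxy, hxy.symm])
      by_contra hFne
      exact hmin {{x}, {y}} (Finset.ssubset_iff_subset_ne.mpr ⟨hsub, fun h => hFne h.symm⟩) hOS
    · rintro ⟨x, y, hxy, rfl⟩
      have hne : ({x} : Finset α) ≠ {y} := by simp [hxy]
      constructor
      · exact disjoint_pair_OS (Finset.singleton_nonempty x) (Finset.singleton_nonempty y)
          hne (by simp [hxy, hxy.symm])
      · intro H hH hOS
        have hlt := Finset.card_lt_card hH
        rw [Finset.card_pair hne] at hlt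
        have := hOS.1
        omega
  · -- Part 2: 2-uniform
    intro F h2
    constructor
    · rintro ⟨⟨hF2, hne, hodd⟩, hmin⟩
      by_cases hdis : ∃ e ∈ F, ∃ g ∈ F, e ≠ g ∧ Disjoint e g
      · -- two disjoint edges
        obtain ⟨e, he, g, hg, heg, hd⟩ := hdis
        have hsub : ({e, g} : Finset (Finset α)) ⊆ F := by
          simp [Finset.insert_subset_iff, he, hg]
        have hOS : IsOddSunflower ({e, g} : Finset (Finset α)) :=
          disjoint_pair_OS (hne e he) (hne g hg) heg hd
        have hFeq : F = {e, g} := by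
          by_contra hFne
          exact hmin {e, g} (Finset.ssubset_iff_subset_ne.mpr ⟨hsub, fun h => hFne h.symm⟩) hOS
        subst hFeq
        obtain ⟨a, b, hab, hea⟩ := Finset.card_eq_two.mp (h2 e he)
        obtain ⟨c, d, hcd, hgc⟩ := Finset.card_eq_two.mp (h2 g hg)
        subst hea; subst hgc
        have hax : ∀ x ∈ ({a, b} : Finset α), x ∉ ({c, d} : Finset α) :=
          fun x hx => Finset.disjoint_left.mp hd hx
        have hac : a ≠ c := by have := hax a (by simp); simp at this; exact this.1
        have had : a ≠ d := by have := hax a (by simp); simp at this; exact this.2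
        have hbc : b ≠ c := by have := hax b (by simp); simp at this; exact this.1
        have hbd : b ≠ d := by have := hax b (by simp); simp at this; exact this.2
        refine ⟨fun x => if x = a then 1 else if x = b then 2 else if x = c then 3 else
          if x = d then 4 else 0, ?_, Or.inl ?_⟩
        · have hsup : ({({a, b} : Finset α), {c, d}} : Finset (Finset α)).sup id
              = {a, b, c, d} := by
            rw [pair_sup]; ext z; simp; tauto
          rw [hsup]; exact injOn4 hab hac had hbc hbd hcd
        · simp [Finset.image_insert, Finset.image_singleton, Ne.symm hab, Ne.symm hac,
            Ne.symm had, Ne.symm hbc, Ne.symm hbd, Ne.symm hcd]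
      · -- intersecting family
        push_neg at hdis
        obtain ⟨e, he, g, hg, heg⟩ := Finset.one_lt_card.mp hF2
        obtain ⟨v, hve, hvg⟩ := Finset.not_disjoint_iff.mp (hdis e he g hg heg)
        obtain ⟨a, hav, hea⟩ := pair_struct hve (h2 e he)
        obtain ⟨b, hbv, hgb⟩ := pair_struct hvg (h2 g hg)
        have hab : a ≠ b := by intro h; exact heg (by rw [hea, hgb, h])
        have hv : ∀ S ∈ F, v ∈ S := by
          intro S hS
          by_contra hvS
          have hSe : S ≠ e := fun h => hvS (h ▸ hve)
          have hSg : S ≠ g := fun h => hvS (h ▸ hvg)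
          have haS : a ∈ S := by
            obtain ⟨w, hwS, hwe⟩ := Finset.not_disjoint_iff.mp (hdis S hS e he hSe)
            rw [hea] at hwe
            rcases Finset.mem_insert.mp hwe with rfl | hwe
            · exact absurd hwS hvS
            · rwa [← Finset.mem_singleton.mp hwe]
          have hbS : b ∈ S := by
            obtain ⟨w, hwS, hwg⟩ := Finset.not_disjoint_iff.mp (hdis S hS g hg hSg)
            rw [hgb] at hwg
            rcases Finset.mem_insert.mp hwg with rfl | hwg
            · exact absurd hwS hvS
            · rwa [← Finset.mem_singleton.mp hwg]
          have hSab : S = {a, b} := eq_pair_of haS hbS hab (h2 S hS)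
          have hall : ∀ T ∈ F, T = e ∨ T = g ∨ T = S := by
            intro T hT
            by_contra hT3
            push_neg at hT3
            obtain ⟨hTe, hTg, hTS⟩ := hT3
            obtain ⟨w1, hw1T, hw1S⟩ := Finset.not_disjoint_iff.mp (hdis T hT S hS hTS)
            rw [hSab] at hw1S
            rcases Finset.mem_insert.mp hw1S with rfl | hw1S
            · -- a ∈ T
              obtain ⟨w2, hw2T, hw2g⟩ := Finset.not_disjoint_iff.mp (hdis T hT g hg hTg)
              rw [hgb] at hw2g
              rcases Finset.mem_insert.mp hw2g with rfl | hw2g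
              · exact hTe (by rw [eq_pair_of hw2T hw1T (Ne.symm hav) (h2 T hT), hea])
              · rw [Finset.mem_singleton.mp hw2g] at hw2T
                exact hTS (by rw [eq_pair_of hw1T hw2T hab (h2 T hT), hSab])
            · rw [Finset.mem_singleton.mp hw1S] at hw1T
              -- b ∈ T
              obtain ⟨w2, hw2T, hw2e⟩ := Finset.not_disjoint_iff.mp (hdis T hT e he hTe)
              rw [hea] at hw2e
              rcases Finset.mem_insert.mp hw2e with rfl | hw2e
              · exact hTg (by rw [eq_pair_of hw2T hw1T (Ne.symm hbv) (h2 T hT), hgb])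
              · rw [Finset.mem_singleton.mp hw2e] at hw2T
                exact hTS (by rw [eq_pair_of hw2T hw1T hab (h2 T hT), hSab])
          have hFeq : F = {e, g, S} := by
            apply Finset.Subset.antisymm
            · intro T hT
              rcases hall T hT with rfl | rfl | rfl <;> simp
            · intro T hT
              simp only [Finset.mem_insert, Finset.mem_singleton] at hT
              rcases hT with rfl | rfl | rfl <;> assumption
          have hodd' := hodd v (Finset.mem_sup.mpr ⟨e, he, hve⟩)
          have hfil : F.filter (fun S' => v ∈ S') = {e, g} := by
            rw [hFeq]
            have hgS : g ≠ S := fun h => hvS (h ▸ hvg)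
            simp [Finset.filter_insert, Finset.filter_singleton, hve, hvg, hvS]
          rw [hfil, Finset.card_pair heg] at hodd'
          simp [Nat.odd_iff] at hodd'
        have hFodd : Odd F.card := by
          have hfil : F.filter (fun S => v ∈ S) = F := Finset.filter_true_of_mem hv
          have h := hodd v (Finset.mem_sup.mpr ⟨e, he, hve⟩)
          rwa [hfil] at h
        have hF3 : F.card = 3 := by
          rcases lt_or_ge F.card 4 with h4 | h4
          · obtain ⟨k, hk⟩ := hFodd; omega
          · obtain ⟨H, hHsub, hH3⟩ := Finset.exists_subset_card_eq (s := F) (n := 3) (by omega)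
            have hHOS : IsOddSunflower H :=
              star_OS (v := v) (by omega) (by rw [hH3]; exact ⟨1, rfl⟩)
                (fun S hS => ⟨hv S (hHsub hS), h2 S (hHsub hS)⟩)
            have hHne : H ≠ F := by intro h; rw [h] at hH3; omega
            exact absurd hHOS (hmin H (Finset.ssubset_iff_subset_ne.mpr ⟨hHsub, hHne⟩))
        obtain ⟨S, T, U, hST, hSU, hTU, hFeq⟩ := Finset.card_eq_three.mp hF3
        have hSF : S ∈ F := by rw [hFeq]; simp
        have hTF : T ∈ F := by rw [hFeq]; simp
        have hUF : U ∈ F := by rw [hFeq]; simp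
        obtain ⟨p, hpv, hSp⟩ := pair_struct (hv S hSF) (h2 S hSF)
        obtain ⟨q, hqv, hTq⟩ := pair_struct (hv T hTF) (h2 T hTF)
        obtain ⟨r, hrv, hUr⟩ := pair_struct (hv U hUF) (h2 U hUF)
        have hpq : p ≠ q := fun h => hST (by rw [hSp, hTq, h])
        have hpr : p ≠ r := fun h => hSU (by rw [hSp, hUr, h])
        have hqr : q ≠ r := fun h => hTU (by rw [hTq, hUr, h])
        refine ⟨fun x => if x = v then 1 else if x = p then 2 else if x = q then 3 else
          if x = r then 4 else 0, ?_, Or.inr ?_⟩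
        · have hsup : F.sup id = {v, p, q, r} := by
            rw [hFeq]
            simp only [Finset.sup_insert, Finset.sup_singleton, id]
            rw [hSp, hTq, hUr]; ext z; simp; tauto
          rw [hsup]
          exact injOn4 (Ne.symm hpv) (Ne.symm hqv) (Ne.symm hrv) hpq hpr hqr
        · rw [hFeq, hSp, hTq, hUr]
          simp [Finset.image_insert, Finset.image_singleton, hpv, hqv, hrv,
            Ne.symm hpq, Ne.symm hpr, Ne.symm hqr]
    · rintro ⟨f, hinj, himg | himg⟩
      · -- two disjoint edges
        have himgInj : ∀ S ∈ F, ∀ T ∈ F, S.image f = T.image f → S = T := by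
          intro S hS T hT h
          have hme : ∀ (W : Finset α), W ∈ F → ∀ x ∈ W, x ∈ (↑(F.sup id) : Set α) :=
            fun W hW x hx => Finset.mem_coe.mpr (Finset.mem_sup.mpr ⟨W, hW, hx⟩)
          apply Finset.Subset.antisymm <;> intro x hx
          · have hfx : f x ∈ T.image f := h ▸ Finset.mem_image_of_mem f hx
            obtain ⟨y, hy, hyx⟩ := Finset.mem_image.mp hfx
            exact (hinj (hme T hT y hy) (hme S hS x hx) hyx) ▸ hy
          · have hfx : f x ∈ S.image f := h ▸ Finset.mem_image_of_mem f hx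
            obtain ⟨y, hy, hyx⟩ := Finset.mem_image.mp hfx
            exact (hinj (hme S hS y hy) (hme T hT x hx) hyx) ▸ hy
        have hcard : F.card = 2 := by
          have := Finset.card_image_of_injOn (s := F) (f := fun S => S.image f)
            (fun S hS T hT h => himgInj S hS T hT h)
          rw [himg] at this
          rw [← this]; decide
        have hS : ∃ S ∈ F, S.image f = {1, 2} := by
          have : ({1, 2} : Finset ℕ) ∈ F.image (fun S => S.image f) := by
            rw [himg]; simp
          simpa using this
        have hT : ∃ T ∈ F, T.image f = {3, 4} := by
          have : ({3, 4} : Finset ℕ) ∈ F.image (fun S => S.image f) := by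
            rw [himg]; simp
          simpa using this
        obtain ⟨S, hSF, hSim⟩ := hS
        obtain ⟨T, hTF, hTim⟩ := hT
        have hST : S ≠ T := by
          intro h; rw [h, hTim] at hSim; exact absurd hSim (by decide)
        have hFeq : F = {S, T} := by
          refine (Finset.eq_of_subset_of_card_le ?_ ?_).symm
          · intro W hW
            rcases Finset.mem_insert.mp hW with rfl | hW
            · exact hSF
            · rw [Finset.mem_singleton.mp hW]; exact hTF
          · rw [hcard, Finset.card_pair hST]
        have hd : Disjoint S T := by
          rw [Finset.disjoint_left]
          intro x hxS hxT
          have h1 : f x ∈ ({1, 2} : Finset ℕ) := hSim ▸ Finset.mem_image_of_mem f hxS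
          have h2' : f x ∈ ({3, 4} : Finset ℕ) := hTim ▸ Finset.mem_image_of_mem f hxT
          simp at h1 h2'; omega
        constructor
        · rw [hFeq]
          exact disjoint_pair_OS (Finset.card_pos.mp (by rw [h2 S hSF]; norm_num))
            (Finset.card_pos.mp (by rw [h2 T hTF]; norm_num)) hST hd
        · intro H hH hOS
          have hlt := Finset.card_lt_card hH
          rw [hcard] at hlt
          have := hOS.1
          omega
      · -- star with three edges
        have himgInj : ∀ S ∈ F, ∀ T ∈ F, S.image f = T.image f → S = T := by
          intro S hS T hT h
          have hme : ∀ (W : Finset α), W ∈ F → ∀ x ∈ W, x ∈ (↑(F.sup id) : Set α) :=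
            fun W hW x hx => Finset.mem_coe.mpr (Finset.mem_sup.mpr ⟨W, hW, hx⟩)
          apply Finset.Subset.antisymm <;> intro x hx
          · have hfx : f x ∈ T.image f := h ▸ Finset.mem_image_of_mem f hx
            obtain ⟨y, hy, hyx⟩ := Finset.mem_image.mp hfx
            exact (hinj (hme T hT y hy) (hme S hS x hx) hyx) ▸ hy
          · have hfx : f x ∈ S.image f := h ▸ Finset.mem_image_of_mem f hx
            obtain ⟨y, hy, hyx⟩ := Finset.mem_image.mp hfx
            exact (hinj (hme S hS y hy) (hme T hT x hx) hyx) ▸ hy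
        have hcard : F.card = 3 := by
          have := Finset.card_image_of_injOn (s := F) (f := fun S => S.image f)
            (fun S hS T hT h => himgInj S hS T hT h)
          rw [himg] at this
          rw [← this]; decide
        have hS : ∃ S ∈ F, S.image f = {1, 2} := by
          have : ({1, 2} : Finset ℕ) ∈ F.image (fun S => S.image f) := by
            rw [himg]; simp
          simpa using this
        have hT : ∃ T ∈ F, T.image f = {1, 3} := by
          have : ({1, 3} : Finset ℕ) ∈ F.image (fun S => S.image f) := by
            rw [himg]; simp
          simpa using this
        have hU : ∃ U ∈ F, U.image f = {1, 4} := by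
          have : ({1, 4} : Finset ℕ) ∈ F.image (fun S => S.image f) := by
            rw [himg]; simp
          simpa using this
        obtain ⟨S, hSF, hSim⟩ := hS
        obtain ⟨T, hTF, hTim⟩ := hT
        obtain ⟨U, hUF, hUim⟩ := hU
        -- common vertex
        obtain ⟨vS, hvS, hfvS⟩ : ∃ y ∈ S, f y = 1 := by
          have : (1 : ℕ) ∈ S.image f := by rw [hSim]; simp
          simpa using this
        obtain ⟨vT, hvT, hfvT⟩ : ∃ y ∈ T, f y = 1 := by
          have : (1 : ℕ) ∈ T.image f := by rw [hTim]; simp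
          simpa using this
        obtain ⟨vU, hvU, hfvU⟩ : ∃ y ∈ U, f y = 1 := by
          have : (1 : ℕ) ∈ U.image f := by rw [hUim]; simp
          simpa using this
        have hme : ∀ (W : Finset α), W ∈ F → ∀ x ∈ W, x ∈ (↑(F.sup id) : Set α) :=
          fun W hW x hx => Finset.mem_coe.mpr (Finset.mem_sup.mpr ⟨W, hW, hx⟩)
        have hvTS : vT = vS := hinj (hme T hTF vT hvT) (hme S hSF vS hvS)
          (by rw [hfvT, hfvS])
        have hvUS : vU = vS := hinj (hme U hUF vU hvU) (hme S hSF vS hvS)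
          (by rw [hfvU, hfvS])
        rw [hvTS] at hvT
        rw [hvUS] at hvU
        have hvmem : ∀ W ∈ F, vS ∈ W := by
          intro W hW
          have hWim : W.image f = {1, 2} ∨ W.image f = {1, 3} ∨ W.image f = {1, 4} := by
            have : W.image f ∈ F.image (fun S => S.image f) :=
              Finset.mem_image_of_mem _ hW
            rw [himg] at this
            simpa using this
          rcases hWim with h | h | h
          · rw [himgInj W hW S hSF (by rw [h, hSim])]; exact hvS
          · rw [himgInj W hW T hTF (by rw [h, hTim])]; exact hvT
          · rw [himgInj W hW U hUF (by rw [h, hUim])]; exact hvU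
        constructor
        · exact star_OS (v := vS) (by omega) (by rw [hcard]; exact ⟨1, rfl⟩)
            (fun W hW => ⟨hvmem W hW, h2 W hW⟩)
        · intro H hH hOS
          have hlt := Finset.card_lt_card hH
          rw [hcard] at hlt
          have hH2 := hOS.1
          have hHc : H.card = 2 := by omega
          obtain ⟨P, Q, hPQ, hHeq⟩ := Finset.card_eq_two.mp hHc
          have hPF : P ∈ F := hH.subset (by rw [hHeq]; simp)
          have hQF : Q ∈ F := hH.subset (by rw [hHeq]; simp)
          rw [hHeq] at hOS
          exact common_pair_not_OS hPQ (hvmem P hPF) (hvmem Q hQF) hOS
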